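/- Under the OCELAD setup, for every t ≥ 1 the total weight satisfies W̃_t = ∑_{I∈ℐ} w̃_t(I) ≤ t·(log₂(t) + 1). -/

import Mathlib

/-- The dyadic interval `I_{j,k} = {k·2^j, …, (k+1)·2^j − 1}` (requires `k ≥ 1`). -/
def dIval (j k : ℕ) : Finset ℕ := Finset.Ico (k * 2 ^ j) ((k + 1) * 2 ^ j)

/-- The set of (index pairs of) dyadic intervals active at time `t`. -/
def ACT (t : ℕ) : Finset (ℕ × ℕ) :=
  ((Finset.range (t + 1)) ×ˢ (Finset.range (t + 1))).filter
    (fun p => 1 ≤ p.2 ∧ t ∈ dIval p.1 p.2)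

/-- The (index pairs of) dyadic intervals whose left endpoint `k·2^j` is at most `t`;
these are the only intervals with possibly nonzero weight `w̃_t(I)`.  (Any such
pair satisfies `j, k ≤ t`, so this finite set contains all of them.) -/
def startedBy (t : ℕ) : Finset (ℕ × ℕ) :=
  ((Finset.range (t + 1)) ×ˢ (Finset.range (t + 1))).filter
    (fun p => 1 ≤ p.2 ∧ p.2 * 2 ^ p.1 ≤ t)

/-- The learning rate `η_I = min{1/2, 1/√|I|}` for an interval at dyadic scale `j`. -/
noncomputable def etaI (j : ℕ) : ℝ := min (1 / 2) (1 / Real.sqrt (2 ^ j))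

lemma etaI_pos (j : ℕ) : 0 < etaI j := by
  apply lt_min (by norm_num)
  positivity

lemma etaI_le_half (j : ℕ) : etaI j ≤ 1 / 2 := min_le_left _ _

lemma mem_startedBy {t : ℕ} {p : ℕ × ℕ} :
    p ∈ startedBy t ↔ 1 ≤ p.2 ∧ p.2 * 2 ^ p.1 ≤ t := by
  simp only [startedBy, Finset.mem_filter, Finset.mem_product, Finset.mem_range, Nat.lt_succ_iff]
  constructor
  · rintro ⟨_, h⟩; exact h
  · rintro ⟨hk, hle⟩
    refine ⟨⟨?_, ?_⟩, hk, hle⟩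
    · exact le_trans (Nat.lt_two_pow_self (n := p.1)).le (le_trans (Nat.le_mul_of_pos_left _ hk) hle)
    · exact le_trans (Nat.le_mul_of_pos_right _ (Nat.pow_pos (by norm_num))) hle

lemma mem_ACT {t : ℕ} {p : ℕ × ℕ} :
    p ∈ ACT t ↔ 1 ≤ p.2 ∧ p.2 * 2 ^ p.1 ≤ t ∧ t < (p.2 + 1) * 2 ^ p.1 := by
  simp only [ACT, Finset.mem_filter, Finset.mem_product, Finset.mem_range, Nat.lt_succ_iff,
    dIval, Finset.mem_Ico]
  constructor
  · rintro ⟨_, hk, h1, h2⟩; exact ⟨hk, h1, h2⟩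
  · rintro ⟨hk, h1, h2⟩
    refine ⟨⟨?_, ?_⟩, hk, h1, h2⟩
    · exact le_trans (Nat.lt_two_pow_self (n := p.1)).le (le_trans (Nat.le_mul_of_pos_left _ hk) h1)
    · exact le_trans (Nat.le_mul_of_pos_right _ (Nat.pow_pos (by norm_num))) h1

lemma startedBy_filter_act (t : ℕ) :
    (startedBy t).filter (fun p => t ∈ dIval p.1 p.2) = ACT t := by
  ext p
  simp only [Finset.mem_filter, mem_startedBy, mem_ACT, dIval, Finset.mem_Ico]
  tauto

lemma startedBy_zero : startedBy 0 = ∅ := by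
  ext p
  simp only [mem_startedBy, Finset.notMem_empty, iff_false, not_and, Nat.le_zero]
  intro hk h
  have h2 := Nat.pow_pos (n := p.1) (show 0 < 2 by norm_num)
  have : 0 < p.2 * 2 ^ p.1 := Nat.mul_pos hk h2
  omega

/-- The intervals starting exactly at time `s`. -/
def newAt (s : ℕ) : Finset (ℕ × ℕ) := (startedBy s).filter (fun p => p.2 * 2 ^ p.1 = s)

lemma mem_newAt {s : ℕ} {p : ℕ × ℕ} : p ∈ newAt s ↔ 1 ≤ p.2 ∧ p.2 * 2 ^ p.1 = s := by
  simp only [newAt, Finset.mem_filter, mem_startedBy]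
  constructor
  · rintro ⟨⟨h1, _⟩, h2⟩; exact ⟨h1, h2⟩
  · rintro ⟨h1, h2⟩; exact ⟨⟨h1, h2.le⟩, h2⟩

lemma startedBy_succ (t : ℕ) : startedBy (t + 1) = startedBy t ∪ newAt (t + 1) := by
  ext p
  simp only [Finset.mem_union, mem_startedBy, mem_newAt]
  omega

lemma disjoint_startedBy_newAt (t : ℕ) : Disjoint (startedBy t) (newAt (t + 1)) := by
  rw [Finset.disjoint_left]
  intro p hp hp'
  rw [mem_startedBy] at hp; rw [mem_newAt] at hp'
  omega

lemma card_newAt_le (s : ℕ) : (newAt s).card ≤ Nat.log 2 s + 1 := by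
  have : (newAt s).card ≤ (Finset.range (Nat.log 2 s + 1)).card := by
    apply Finset.card_le_card_of_injOn (fun p => p.1)
    · intro p hp
      rw [Finset.mem_coe, mem_newAt] at hp
      rw [Finset.mem_coe, Finset.mem_range, Nat.lt_succ_iff]
      calc p.1 = Nat.log 2 (2 ^ p.1) := (Nat.log_pow (by norm_num) p.1).symm
        _ ≤ Nat.log 2 s := Nat.log_mono_right (by
            calc 2 ^ p.1 ≤ p.2 * 2 ^ p.1 := Nat.le_mul_of_pos_left _ hp.1
              _ = s := hp.2)
    · intro p hp q hq hpq
      rw [Finset.mem_coe, mem_newAt] at hp hq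
      have h2 : p.2 * 2 ^ p.1 = q.2 * 2 ^ q.1 := by rw [hp.2, hq.2]
      simp only at hpq
      ext
      · exact hpq
      · rw [hpq] at h2
        exact Nat.eq_of_mul_eq_mul_right (Nat.pow_pos (by norm_num)) h2
  simpa using this

/-- Under the OCELAD setup, the total weight satisfies
`W̃_t = ∑_{I∈ℐ} w̃_t(I) ≤ t·(log₂ t + 1)` for every `t ≥ 1`.  (Intervals starting
after time `t` have zero weight, so the sum is taken over `startedBy t`.) -/
theorem ocelad_total_weight_le
    {d : ℕ} (Θ : Set (EuclideanSpace ℝ (Fin d))) (hΘ : Convex ℝ Θ)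
    (ℓ : ℕ → EuclideanSpace ℝ (Fin d) → ℝ) (hℓ : ∀ t, ConvexOn ℝ Θ (ℓ t))
    (θL : ℕ → ℕ × ℕ → EuclideanSpace ℝ (Fin d))
    (hθL : ∀ t I, I ∈ ACT t → θL t I ∈ Θ)
    (wtil w : ℕ → ℕ × ℕ → ℝ) (θhat : ℕ → EuclideanSpace ℝ (Fin d))
    (r : ℕ → ℕ × ℕ → ℝ) (ρ : ℕ → ℝ)
    (hwtil_before : ∀ t j k, 1 ≤ k → t < k * 2 ^ j → wtil t (j, k) = 0)
    (hwtil_init : ∀ j k, 1 ≤ k → wtil (k * 2 ^ j) (j, k) = 1)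
    (hwtil_rec : ∀ t j k, 1 ≤ k → k * 2 ^ j ≤ t → t < (k + 1) * 2 ^ j →
      wtil (t + 1) (j, k) = wtil t (j, k) * (1 + etaI j * ρ t * r t (j, k)))
    (hwtil_after : ∀ t j k, 1 ≤ k → (k + 1) * 2 ^ j < t →
      wtil t (j, k) = wtil ((k + 1) * 2 ^ j) (j, k))
    (hw : ∀ t j k, w t (j, k) = etaI j * (if t ∈ dIval j k then (1 : ℝ) else 0) * wtil t (j, k))
    (hθhat : ∀ t, θhat t = ∑ I ∈ ACT t, (w t I / ∑ I' ∈ ACT t, w t I') • θL t I)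
    (hr : ∀ t I, r t I = ℓ t (θhat t) - ℓ t (θL t I))
    (hρ : ∀ t, ρ t = if hne : (ACT t).Nonempty then
        (if (ACT t).sup' hne (fun I => |r t I|) = 0 then 1
         else ((ACT t).sup' hne (fun I => |r t I|))⁻¹) else 1) :
    ∀ t : ℕ, 1 ≤ t →
      ∑ I ∈ startedBy t, wtil t I ≤ t * (Real.logb 2 t + 1) := by
  -- ρ is nonnegative
  have hρ_nonneg : ∀ t, 0 ≤ ρ t := by
    intro t
    rw [hρ]
    split
    · next hne =>
      split
      · norm_num
      · next =>
        obtain ⟨I, hI⟩ := hne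
        exact inv_nonneg.mpr (le_trans (abs_nonneg _) (Finset.le_sup' (fun J => |r t J|) hI))
    · norm_num
  -- the normalized estimated regrets are bounded by 1 in absolute value
  have habs_le : ∀ t I, I ∈ ACT t → |ρ t * r t I| ≤ 1 := by
    intro t I hI
    have hne : (ACT t).Nonempty := ⟨I, hI⟩
    have hIM : |r t I| ≤ (ACT t).sup' hne (fun J => |r t J|) := Finset.le_sup' (fun J => |r t J|) hI
    rw [hρ, dif_pos hne]
    by_cases h0 : (ACT t).sup' hne (fun J => |r t J|) = 0
    · rw [if_pos h0]
      have : |r t I| = 0 := le_antisymm (h0 ▸ hIM) (abs_nonneg _)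
      rw [abs_mul, abs_one, one_mul, this]
      norm_num
    · rw [if_neg h0]
      have hMpos : 0 < (ACT t).sup' hne (fun J => |r t J|) :=
        lt_of_le_of_ne (le_trans (abs_nonneg _) hIM) (Ne.symm h0)
      rw [abs_mul, abs_inv, abs_of_pos hMpos]
      rw [inv_mul_le_iff₀ hMpos, mul_one]
      exact hIM
  -- the weights w̃ are nonnegative
  have hwnn : ∀ t j k, 1 ≤ k → 0 ≤ wtil t (j, k) := by
    intro t
    induction t using Nat.strong_induction_on with
    | _ t ih =>
      intro j k hk
      rcases lt_or_ge t (k * 2 ^ j) with h | h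
      · rw [hwtil_before t j k hk h]
      · rcases eq_or_lt_of_le h with h' | h'
        · rw [← h', hwtil_init j k hk]; norm_num
        · -- k * 2^j < t, so t = (t-1)+1
          obtain ⟨s, rfl⟩ : ∃ s, t = s + 1 := ⟨t - 1, by omega⟩
          rcases lt_or_ge s ((k + 1) * 2 ^ j) with hs | hs
          · -- recursion case
            have hs1 : k * 2 ^ j ≤ s := by omega
            rw [hwtil_rec s j k hk hs1 hs]
            apply mul_nonneg (ih s (by omega) j k hk)
            have hact : (j, k) ∈ ACT s := mem_ACT.mpr ⟨hk, hs1, hs⟩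
            have h1 := habs_le s (j, k) hact
            have h2 := etaI_le_half j
            have h3 := (etaI_pos j).le
            have h4 : |etaI j * (ρ s * r s (j, k))| ≤ 1 / 2 := by
              rw [abs_mul, abs_of_nonneg h3]
              calc etaI j * |ρ s * r s (j, k)| ≤ (1 / 2) * 1 :=
                mul_le_mul h2 h1 (abs_nonneg _) (by norm_num)
                _ = 1 / 2 := by norm_num
            have h5 := neg_abs_le (etaI j * (ρ s * r s (j, k)))
            have : etaI j * ρ s * r s (j, k) = etaI j * (ρ s * r s (j, k)) := by ring
            rw [this]
            linarith
          · -- after the end of the interval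
            rw [hwtil_after (s + 1) j k hk (by omega)]
            rcases eq_or_lt_of_le hs with he | he
            · rw [he]; exact ih s (by omega) j k hk
            · have := hwtil_after s j k hk he
              rw [← this]
              exact ih s (by omega) j k hk
  -- the weights w are nonnegative on active intervals
  have hwpos : ∀ t, ∀ I ∈ ACT t, 0 ≤ w t I := by
    intro t I hI
    obtain ⟨j, k⟩ := I
    have hk : 1 ≤ k := (mem_ACT.mp hI).1
    rw [hw]
    apply mul_nonneg (mul_nonneg (etaI_pos j).le _) (hwnn t j k hk)
    split <;> norm_num
  -- Jensen: the weighted sum of estimated regrets is nonpositive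
  have hJensen : ∀ t, ∑ I ∈ ACT t, w t I * r t I ≤ 0 := by
    intro t
    set S := ∑ I ∈ ACT t, w t I with hS
    rcases eq_or_lt_of_le (Finset.sum_nonneg (hwpos t) : (0:ℝ) ≤ S) with hS0 | hS0
    · have hz : ∀ I ∈ ACT t, w t I = 0 :=
        (Finset.sum_eq_zero_iff_of_nonneg (hwpos t)).mp hS0.symm
      have : ∑ I ∈ ACT t, w t I * r t I = 0 :=
        Finset.sum_eq_zero fun I hI => by rw [hz I hI, zero_mul]
      rw [this]
    · have hsum1 : ∑ I ∈ ACT t, w t I / S = 1 := by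
        rw [← Finset.sum_div, ← hS, div_self hS0.ne']
      have hj := (hℓ t).map_sum_le (t := ACT t) (w := fun I => w t I / S) (p := θL t)
        (fun I hI => div_nonneg (hwpos t I hI) hS0.le) hsum1 (hθL t)
      rw [← hθhat t] at hj
      simp only [smul_eq_mul] at hj
      -- hj : ℓ t (θhat t) ≤ ∑ I, (w t I / S) * ℓ t (θL t I)
      have key : ∑ I ∈ ACT t, w t I * r t I
          = S * (ℓ t (θhat t) - ∑ I ∈ ACT t, (w t I / S) * ℓ t (θL t I)) := by
        rw [mul_sub, hS, Finset.sum_mul, Finset.mul_sum]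
        rw [← Finset.sum_sub_distrib]
        apply Finset.sum_congr rfl
        intro I hI
        rw [hr]
        field_simp
      rw [key]
      apply mul_nonpos_of_nonneg_of_nonpos hS0.le
      linarith
  -- one-step bound
  have hstep : ∀ t, ∑ I ∈ startedBy (t + 1), wtil (t + 1) I
      ≤ (∑ I ∈ startedBy t, wtil t I) + ((newAt (t + 1)).card : ℝ) := by
    intro t
    rw [startedBy_succ, Finset.sum_union (disjoint_startedBy_newAt t)]
    have h2 : ∑ I ∈ newAt (t + 1), wtil (t + 1) I = ((newAt (t + 1)).card : ℝ) := by
      rw [Finset.sum_congr rfl (fun p hp => show wtil (t + 1) p = 1 from ?_),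
        Finset.sum_const, nsmul_eq_mul, mul_one]
      rw [mem_newAt] at hp
      have hinit := hwtil_init p.1 p.2 hp.1
      rw [hp.2] at hinit
      exact hinit
    have h1 : ∑ I ∈ startedBy t, wtil (t + 1) I ≤ ∑ I ∈ startedBy t, wtil t I := by
      have hpt : ∀ p ∈ startedBy t, wtil (t + 1) p = wtil t p +
          (if t ∈ dIval p.1 p.2 then etaI p.1 * ρ t * r t p * wtil t p else 0) := by
        intro p hp
        obtain ⟨j, k⟩ := p
        rw [mem_startedBy] at hp
        obtain ⟨hk, hle⟩ := hp
        by_cases hact : t ∈ dIval j k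
        · rw [if_pos hact]
          rw [dIval, Finset.mem_Ico] at hact
          rw [hwtil_rec t j k hk hact.1 hact.2]; ring
        · rw [if_neg hact, add_zero]
          rw [dIval, Finset.mem_Ico] at hact
          push_neg at hact
          have hend : (k + 1) * 2 ^ j ≤ t := hact hle
          have e1 : wtil (t + 1) (j, k) = wtil ((k + 1) * 2 ^ j) (j, k) :=
            hwtil_after (t + 1) j k hk (by omega)
          rcases eq_or_lt_of_le hend with he | he
          · rw [e1, he]
          · rw [e1, hwtil_after t j k hk he]
      rw [Finset.sum_congr rfl hpt, Finset.sum_add_distrib]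
      have hfil : ∑ p ∈ startedBy t,
          (if t ∈ dIval p.1 p.2 then etaI p.1 * ρ t * r t p * wtil t p else 0)
          = ∑ p ∈ ACT t, etaI p.1 * ρ t * r t p * wtil t p := by
        rw [← Finset.sum_filter, startedBy_filter_act]
      rw [hfil]
      have heq : ∀ p ∈ ACT t, etaI p.1 * ρ t * r t p * wtil t p = ρ t * (w t p * r t p) := by
        intro p hp
        obtain ⟨j, k⟩ := p
        have h' := mem_ACT.mp hp
        have hact : t ∈ dIval j k := by
          rw [dIval, Finset.mem_Ico]; exact ⟨h'.2.1, h'.2.2⟩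
        rw [hw, if_pos hact]; ring
      rw [Finset.sum_congr rfl heq, ← Finset.mul_sum]
      have := mul_nonpos_of_nonneg_of_nonpos (hρ_nonneg t) (hJensen t)
      linarith
    linarith
  -- main induction: bound by t * (Nat.log 2 t + 1)
  have hmain : ∀ t : ℕ, ∑ I ∈ startedBy t, wtil t I ≤ (t : ℝ) * ((Nat.log 2 t : ℝ) + 1) := by
    intro t
    induction t with
    | zero => rw [startedBy_zero]; simp
    | succ n ihn =>
      have hc : ((newAt (n + 1)).card : ℝ) ≤ (Nat.log 2 (n + 1) : ℝ) + 1 := by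
        exact_mod_cast card_newAt_le (n + 1)
      have hmono : (Nat.log 2 n : ℝ) ≤ (Nat.log 2 (n + 1) : ℝ) := by
        exact_mod_cast Nat.log_mono_right (by omega)
      have hst := hstep n
      have hnn : (0 : ℝ) ≤ (n : ℝ) := Nat.cast_nonneg n
      push_cast
      nlinarith [mul_le_mul_of_nonneg_left hmono hnn]
  -- conclude
  intro t ht
  refine (hmain t).trans ?_
  have hlog : (Nat.log 2 t : ℝ) ≤ Real.logb 2 t := by
    have h1 : (2 : ℝ) ^ (Nat.log 2 t) ≤ (t : ℝ) := by
      exact_mod_cast Nat.pow_log_le_self 2 (by omega)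
    calc (Nat.log 2 t : ℝ) = Real.logb 2 ((2 : ℝ) ^ (Nat.log 2 t)) := by
          rw [Real.logb_pow, Real.logb_self_eq_one (by norm_num), mul_one]
      _ ≤ Real.logb 2 t := Real.logb_le_logb_of_le (by norm_num) (by positivity) h1
  have htnn : (0 : ℝ) ≤ (t : ℝ) := Nat.cast_nonneg t
  apply mul_le_mul_of_nonneg_left _ htnn
  linarith
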